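/- Let (P,≤) be a finite pointed poset, L = D(P,≤), and let ≤¹, ≤² be two pointed quasi-order extensions of ≤. The sublattices D(P,≤¹) and D(P,≤²) have nonempty intersection if and only if in the transitive closure of the union of ≤¹ and ≤², the elements 0̂ and 1̂ are in distinct equivalence classes. -/
import Mathlib


def QDownsets {P : Type*} [PartialOrder P] [BoundedOrder P]
    (r : P → P → Prop) : Set (Set P) :=
  {D | (∀ i j : P, r i j → j ∈ D → i ∈ D) ∧ ⊥ ∈ D ∧ ⊤ ∉ D}

def IsExtension {P : Type*} [PartialOrder P] [BoundedOrder P]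
    (r : P → P → Prop) : Prop :=
  Reflexive r ∧ Transitive r ∧ (∀ i j : P, i ≤ j → r i j) ∧ ¬ r ⊤ ⊥

/-- For two pointed quasi-order extensions `≤¹`, `≤²` of a finite pointed poset,
`D(P,≤¹) ∩ D(P,≤²)` is nonempty iff `0̂` and `1̂` lie in distinct equivalence
classes of the transitive closure of `≤¹ ∪ ≤²`. -/
theorem inter_nonempty_iff_compatible
    {P : Type*} [PartialOrder P] [BoundedOrder P] [Fintype P]
    (hP : (⊥ : P) ≠ ⊤)
    (r₁ r₂ : P → P → Prop) (h₁ : IsExtension r₁) (h₂ : IsExtension r₂) :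
    (QDownsets r₁ ∩ QDownsets r₂).Nonempty ↔
      ¬ (Relation.TransGen (fun i j => r₁ i j ∨ r₂ i j) (⊥ : P) ⊤ ∧
         Relation.TransGen (fun i j => r₁ i j ∨ r₂ i j) (⊤ : P) ⊥) := by
  set R : P → P → Prop := fun i j => r₁ i j ∨ r₂ i j with hR
  constructor
  · rintro ⟨D, ⟨hD1, hb, ht⟩, ⟨hD2, -, -⟩⟩ ⟨-, htop⟩
    -- D is closed under R, hence under TransGen R
    have key : ∀ i j : P, Relation.TransGen R i j → j ∈ D → i ∈ D := by
      intro i j h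
      induction h with
      | single h =>
        intro hj
        rcases h with h | h
        · exact hD1 _ _ h hj
        · exact hD2 _ _ h hj
      | tail _ h ih =>
        intro hj
        rcases h with h | h
        · exact ih (hD1 _ _ h hj)
        · exact ih (hD2 _ _ h hj)
    exact ht (key ⊤ ⊥ htop hb)
  · intro hcon
    have hbt : Relation.TransGen R (⊥ : P) ⊤ :=
      Relation.TransGen.single (Or.inl (h₁.2.2.1 ⊥ ⊤ le_top))
    have htb : ¬ Relation.TransGen R (⊤ : P) ⊥ := fun h => hcon ⟨hbt, h⟩
    refine ⟨{i | Relation.ReflTransGen R i ⊥}, ?_, ?_⟩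
    · refine ⟨fun i j hij hj => Relation.ReflTransGen.head (Or.inl hij) hj,
        Relation.ReflTransGen.refl, fun h => ?_⟩
      rcases (Relation.reflTransGen_iff_eq_or_transGen).mp h with h | h
      · exact hP h
      · exact htb h
    · refine ⟨fun i j hij hj => Relation.ReflTransGen.head (Or.inr hij) hj,
        Relation.ReflTransGen.refl, fun h => ?_⟩
      rcases (Relation.reflTransGen_iff_eq_or_transGen).mp h with h | h
      · exact hP h
      · exact htb h
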